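/- The piecewise function qᵉ : [0,∞) → ℝ (equal to r for r < 1/ε, to −(ε/2)(r − 2/ε)² + 3/(2ε) for 1/ε ≤ r < 2/ε, and to 3/(2ε) for r ≥ 2/ε) is continuously differentiable on (0,∞) and satisfies |(d/dr)(qᵉ(r) − r)| ≤ 2εr for all r > 0. -/

import Mathlib

noncomputable def qtrunc (ε : ℝ) (r : ℝ) : ℝ :=
  if r < 1 / ε then r
  else if r < 2 / ε then -(ε / 2) * (r - 2 / ε) ^ 2 + 3 / (2 * ε)
  else 3 / (2 * ε)

noncomputable def qd (ε r : ℝ) : ℝ := min 1 (max 0 (2 - ε * r))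

lemma qmid_hasDerivAt {ε : ℝ} (hε : 0 < ε) (r : ℝ) :
    HasDerivAt (fun s => -(ε / 2) * (s - 2 / ε) ^ 2 + 3 / (2 * ε)) (2 - ε * r) r := by
  have h := ((((hasDerivAt_id r).sub_const (2 / ε)).pow 2).const_mul (-(ε / 2))).add_const
      (3 / (2 * ε))
  have hne : ε ≠ 0 := hε.ne'
  refine HasDerivAt.congr_deriv (f := fun s => -(ε / 2) * (s - 2 / ε) ^ 2 + 3 / (2 * ε)) h ?_
  simp only [id]; push_cast
  field_simp
  ring

lemma qtrunc_hasDerivAt (ε : ℝ) (hε : 0 < ε) (r : ℝ) :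
    HasDerivAt (qtrunc ε) (qd ε r) r := by
  have h12 : (1:ℝ) / ε < 2 / ε := by
    exact (div_lt_div_iff_of_pos_right hε).mpr one_lt_two
  have heq1 : ∀ s : ℝ, s < 1 / ε → qtrunc ε s = s := fun s hs => if_pos hs
  have heq2 : ∀ s : ℝ, 1 / ε ≤ s → s < 2 / ε →
      qtrunc ε s = -(ε / 2) * (s - 2 / ε) ^ 2 + 3 / (2 * ε) := by
    intro s h1 h2
    rw [qtrunc, if_neg (not_lt.mpr h1), if_pos h2]
  have heq3 : ∀ s : ℝ, 2 / ε ≤ s → qtrunc ε s = 3 / (2 * ε) := by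
    intro s h2
    rw [qtrunc, if_neg (by linarith), if_neg (not_lt.mpr h2)]
  have hεne : ε ≠ 0 := hε.ne'
  rcases lt_trichotomy r (1 / ε) with hc1 | hc1 | hc1
  · -- r < 1/ε
    have hqd : qd ε r = 1 := by
      have h1 : ε * r < 1 := (lt_div_iff₀' hε).mp hc1
      rw [qd, max_eq_right (by linarith), min_eq_left (by linarith)]
    rw [hqd]
    apply (hasDerivAt_id r).congr_of_eventuallyEq
    filter_upwards [eventually_lt_nhds hc1] with s hs
    exact heq1 s hs
  · -- r = 1/ε : junction
    subst hc1
    have hqd : qd ε (1 / ε) = 1 := by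
      rw [qd, mul_one_div, div_self hεne]; norm_num
    rw [hqd]
    have hval : qtrunc ε (1 / ε) = 1 / ε := by
      rw [heq2 _ le_rfl h12]
      field_simp
      ring
    have hL : HasDerivWithinAt (qtrunc ε) 1 (Set.Iic (1 / ε)) (1 / ε) := by
      apply (hasDerivAt_id (1 / ε)).hasDerivWithinAt.congr
      · intro y hy
        rcases lt_or_eq_of_le (Set.mem_Iic.mp hy) with h | h
        · exact heq1 y h
        · rw [h, hval, id]
      · exact hval
    have hR : HasDerivWithinAt (qtrunc ε) 1 (Set.Ici (1 / ε)) (1 / ε) := by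
      have hg : HasDerivWithinAt (fun s => -(ε / 2) * (s - 2 / ε) ^ 2 + 3 / (2 * ε))
          1 (Set.Ici (1 / ε)) (1 / ε) := by
        have := (qmid_hasDerivAt hε (1 / ε)).hasDerivWithinAt (s := Set.Ici (1 / ε))
        rwa [mul_one_div, div_self hεne, show (2:ℝ) - 1 = 1 by norm_num] at this
      apply hg.congr_of_eventuallyEq
      · filter_upwards [Ico_mem_nhdsGE_of_mem (Set.mem_Ico.mpr ⟨le_rfl, h12⟩)] with s hs
        exact heq2 s hs.1 hs.2
      · exact heq2 _ le_rfl h12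
    have := hL.union hR
    rwa [Set.Iic_union_Ici, hasDerivWithinAt_univ] at this
  · rcases lt_trichotomy r (2 / ε) with hc2 | hc2 | hc2
    · -- middle open region
      have hεr1 : 1 < ε * r := by rw [← div_lt_iff₀' hε]; exact hc1
      have hεr2 : ε * r < 2 := by rw [← lt_div_iff₀' hε]; exact hc2
      have hqd : qd ε r = 2 - ε * r := by
        rw [qd, max_eq_right (by linarith), min_eq_right (by linarith)]
      rw [hqd]
      apply (qmid_hasDerivAt hε r).congr_of_eventuallyEq
      filter_upwards [eventually_gt_nhds hc1, eventually_lt_nhds hc2] with s h1 h2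
      exact heq2 s h1.le h2
    · -- r = 2/ε : junction
      subst hc2
      have hε2 : ε * (2 / ε) = 2 := by field_simp
      have hqd : qd ε (2 / ε) = 0 := by rw [qd, hε2]; norm_num
      rw [hqd]
      have hval : qtrunc ε (2 / ε) = -(ε / 2) * (2 / ε - 2 / ε) ^ 2 + 3 / (2 * ε) := by
        rw [heq3 _ le_rfl]; ring_nf
      have hL : HasDerivWithinAt (qtrunc ε) 0 (Set.Iic (2 / ε)) (2 / ε) := by
        have hg : HasDerivWithinAt (fun s => -(ε / 2) * (s - 2 / ε) ^ 2 + 3 / (2 * ε))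
            0 (Set.Iic (2 / ε)) (2 / ε) := by
          have := (qmid_hasDerivAt hε (2 / ε)).hasDerivWithinAt (s := Set.Iic (2 / ε))
          rwa [hε2, show (2:ℝ) - 2 = 0 by norm_num] at this
        apply hg.congr_of_eventuallyEq
        · filter_upwards [Ioc_mem_nhdsLE_of_mem (Set.mem_Ioc.mpr ⟨h12, le_rfl⟩)] with s hs
          rcases lt_or_eq_of_le hs.2 with h | h
          · exact heq2 s hs.1.le h
          · rw [h, hval]
        · exact hval
      have hR : HasDerivWithinAt (qtrunc ε) 0 (Set.Ici (2 / ε)) (2 / ε) := by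
        apply (hasDerivWithinAt_const (2 / ε) _ (3 / (2 * ε))).congr
        · intro y hy
          exact heq3 y hy
        · exact heq3 _ le_rfl
      have := hL.union hR
      rwa [Set.Iic_union_Ici, hasDerivWithinAt_univ] at this
    · -- r > 2/ε
      have hεr : 2 < ε * r := by rw [← div_lt_iff₀' hε]; exact hc2
      have hqd : qd ε r = 0 := by
        rw [qd, max_eq_left (by linarith), min_eq_right (by norm_num)]
      rw [hqd]
      apply (hasDerivAt_const r (3 / (2 * ε))).congr_of_eventuallyEq
      filter_upwards [eventually_gt_nhds hc2] with s hs
      exact heq3 s hs.le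

theorem qtrunc_C1 (ε : ℝ) (hε : 0 < ε) :
    ContDiffOn ℝ 1 (qtrunc ε) (Set.Ioi 0) ∧
    ∀ r : ℝ, 0 < r → |deriv (fun s => qtrunc ε s - s) r| ≤ 2 * ε * r := by
  have hd := qtrunc_hasDerivAt ε hε
  constructor
  · apply ContDiff.contDiffOn
    rw [contDiff_one_iff_deriv]
    constructor
    · exact fun r => (hd r).differentiableAt
    · have : deriv (qtrunc ε) = qd ε := funext fun r => (hd r).deriv
      rw [this]
      exact continuous_const.min (continuous_const.max (by continuity))
  · intro r hr
    have h : HasDerivAt (fun s => qtrunc ε s - s) (qd ε r - 1) r :=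
      (hd r).sub (hasDerivAt_id r)
    rw [h.deriv]
    have ht : 0 < ε * r := mul_pos hε hr
    unfold qd
    rcases le_total (ε * r) 1 with h1 | h1
    · rw [max_eq_right (by linarith), min_eq_left (by linarith)]
      simp; linarith
    · rcases le_total (ε * r) 2 with h2 | h2
      · rw [max_eq_right (by linarith), min_eq_right (by linarith)]
        rw [abs_le]; constructor <;> linarith
      · rw [max_eq_left (by linarith), min_eq_right (by linarith)]
        rw [abs_le]; constructor <;> linarith
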